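/- Let (P, ∘, [·,·]) be a transposed Poisson algebra of finite dimension n over an algebraically closed field F of characteristic different from 2. If the Lie algebra (P, [·,·]) is directly indecomposable, then for every x ∈ P the characteristic polynomial of the operator P_x is (t − λ_x)^n for some scalar λ_x ∈ F. -/

import Mathlib

open Polynomial Module

private lemma tpa_star {F P : Type*} [Field F] [AddCommGroup P] [Module F P]
    (mul bra : P →ₗ[F] P →ₗ[F] P)
    (hassoc : ∀ x y z : P, mul (mul x y) z = mul x (mul y z))
    (hleib : ∀ x y z : P, (2 : F) • mul x (bra y z) = bra (mul x y) z + bra y (mul x z))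
    (x z w : P) :
    bra (mul x (mul x z)) w + bra z (mul x (mul x w)) = (2:F) • bra (mul x z) (mul x w) := by
  have h1 := hleib x (mul x z) w
  have h2 := hleib x z (mul x w)
  have h3 := hleib (mul x x) z w
  rw [hassoc x x z, hassoc x x w, hassoc x x (bra z w)] at h3
  have h4 := congrArg (fun t => mul x t) (hleib x z w)
  simp only [map_smul, map_add] at h4
  linear_combination (norm := module) h1 + h2 - (2:F) • h3 + (2:F) • h4

private lemma tpa_vanish {F P : Type*} [Field F] [AddCommGroup P] [Module F P]
    (mul bra : P →ₗ[F] P →ₗ[F] P)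
    (hassoc : ∀ x y z : P, mul (mul x y) z = mul x (mul y z))
    (hleib : ∀ x y z : P, (2 : F) • mul x (bra y z) = bra (mul x y) z + bra y (mul x z))
    (x : P) {α β : F} (hne : α ≠ β) {z w : P}
    (hz : z ∈ Module.End.maxGenEigenspace (mul x) α)
    (hw : w ∈ Module.End.maxGenEigenspace (mul x) β) :
    bra z w = 0 := by
  rw [Module.End.mem_maxGenEigenspace] at hz hw
  obtain ⟨p, hp⟩ := hz
  obtain ⟨q, hq⟩ := hw
  set A : Module.End F P := mul x - α • 1 with hA
  set B : Module.End F P := mul x - β • 1 with hB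
  have hAv : ∀ v : P, A v = mul x v - α • v := fun v => by
    simp [hA, LinearMap.sub_apply, LinearMap.smul_apply]
  have hBv : ∀ v : P, B v = mul x v - β • v := fun v => by
    simp [hB, LinearMap.sub_apply, LinearMap.smul_apply]
  have hrec : ∀ z' w' : P,
      ((α - β)^2) • bra z' w' =
        (2:F) • bra (A z') (B w') - bra (A (A z')) w' - bra z' (B (B w'))
          + ((2:F)*(β - α)) • bra (A z') w' + ((2:F)*(α - β)) • bra z' (B w') := by
    intro z' w'
    have hstar := tpa_star mul bra hassoc hleib x z' w'
    simp only [hAv, hBv, map_sub, map_smul, LinearMap.sub_apply, LinearMap.smul_apply]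
    linear_combination (norm := module) hstar
  have epow : ∀ (T : Module.End F P) (k : ℕ) (v : P), T ((T^k) v) = (T^(k+1)) v := by
    intro T k v
    rw [pow_succ' T k, Module.End.mul_apply]
  have key : ∀ m i j : ℕ, p + q ≤ i + j + m → bra ((A^i) z) ((B^j) w) = 0 := by
    intro m
    induction m with
    | zero =>
      intro i j hij
      rcases le_or_gt p i with h | h
      · have hz0 : (A^i) z = 0 := by
          obtain ⟨d, rfl⟩ := Nat.exists_eq_add_of_le h
          rw [add_comm, pow_add, Module.End.mul_apply, hp, map_zero]
        rw [hz0, map_zero, LinearMap.zero_apply]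
      · have hq' : q ≤ j := by omega
        have hw0 : (B^j) w = 0 := by
          obtain ⟨d, rfl⟩ := Nat.exists_eq_add_of_le hq'
          rw [add_comm, pow_add, Module.End.mul_apply, hq, map_zero]
        rw [hw0, map_zero]
    | succ m ih =>
      intro i j hij
      have h := hrec ((A^i) z) ((B^j) w)
      rw [epow A i z, epow B j w, epow A (i+1) z, epow B (j+1) w] at h
      rw [ih (i+1) (j+1) (by omega), ih (i+2) j (by omega), ih i (j+2) (by omega),
        ih (i+1) j (by omega), ih i (j+1) (by omega)] at h
      simp only [smul_zero, sub_zero, add_zero] at h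
      rcases smul_eq_zero.mp h with h' | h'
      · exact absurd h' (pow_ne_zero _ (sub_ne_zero.mpr hne))
      · exact h'
  have := key (p + q) 0 0 (by omega)
  simpa using this

private lemma tpa_closed {F P : Type*} [Field F] [AddCommGroup P] [Module F P]
    (hchar : (2 : F) ≠ 0)
    (mul bra : P →ₗ[F] P →ₗ[F] P)
    (hleib : ∀ x y z : P, (2 : F) • mul x (bra y z) = bra (mul x y) z + bra y (mul x z))
    (x : P) {α : F} {z w : P}
    (hz : z ∈ Module.End.maxGenEigenspace (mul x) α)
    (hw : w ∈ Module.End.maxGenEigenspace (mul x) α) :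
    bra z w ∈ Module.End.maxGenEigenspace (mul x) α := by
  rw [Module.End.mem_maxGenEigenspace] at hz hw ⊢
  obtain ⟨p, hp⟩ := hz
  obtain ⟨q, hq⟩ := hw
  set A : Module.End F P := mul x - α • 1 with hA
  have hAv : ∀ v : P, A v = mul x v - α • v := fun v => by
    simp [hA, LinearMap.sub_apply, LinearMap.smul_apply]
  have hrec : ∀ z' w' : P, (2:F) • A (bra z' w') = bra (A z') w' + bra z' (A w') := by
    intro z' w'
    have h := hleib x z' w'
    simp only [hAv, map_sub, map_smul, LinearMap.sub_apply, LinearMap.smul_apply]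
    linear_combination (norm := module) h
  have epow : ∀ (k : ℕ) (v : P), A ((A^k) v) = (A^(k+1)) v := by
    intro k v
    rw [pow_succ' A k, Module.End.mul_apply]
  have key : ∀ m i j : ℕ, p + q ≤ i + j + m → (A^m) (bra ((A^i) z) ((A^j) w)) = 0 := by
    intro m
    induction m with
    | zero =>
      intro i j hij
      rcases le_or_gt p i with h | h
      · have hz0 : (A^i) z = 0 := by
          obtain ⟨d, rfl⟩ := Nat.exists_eq_add_of_le h
          rw [add_comm, pow_add, Module.End.mul_apply, hp, map_zero]
        rw [hz0]
        simp
      · have hq' : q ≤ j := by omega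
        have hw0 : (A^j) w = 0 := by
          obtain ⟨d, rfl⟩ := Nat.exists_eq_add_of_le hq'
          rw [add_comm, pow_add, Module.End.mul_apply, hq, map_zero]
        rw [hw0]
        simp
    | succ m ih =>
      intro i j hij
      have h2 : (2:F) • (A^(m+1)) (bra ((A^i) z) ((A^j) w)) = 0 := by
        rw [pow_succ A m, Module.End.mul_apply, ← map_smul, hrec, map_add,
          epow i z, epow j w, ih (i+1) j (by omega), ih i (j+1) (by omega), add_zero]
      rcases smul_eq_zero.mp h2 with h' | h'
      · exact absurd h' hchar
      · exact h'
  refine ⟨p + q, ?_⟩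
  have := key (p + q) 0 0 (by omega)
  simpa using this

private lemma charpoly_sub_smul_one {R : Type*} [CommRing R] {n : Type*} [DecidableEq n] [Fintype n]
    (M : Matrix n n R) (r : R) :
    (M - r • 1).charpoly = M.charpoly.comp (X + C r) := by
  have hmat : Matrix.charmatrix (M - r • 1)
      = (Matrix.charmatrix M).map (aeval (X + C r) : R[X] →ₐ[R] R[X]).toRingHom := by
    refine Matrix.ext fun i j => ?_
    rcases eq_or_ne i j with rfl | h
    · simp only [Matrix.charmatrix_apply_eq, Matrix.sub_apply, Matrix.smul_apply,
        Matrix.one_apply_eq, Matrix.map_apply, AlgHom.toRingHom_eq_coe, RingHom.coe_coe,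
        map_sub, aeval_X, aeval_C, smul_eq_mul, mul_one, Polynomial.algebraMap_eq]
      ring
    · simp only [Matrix.charmatrix_apply_ne _ _ _ h, Matrix.sub_apply, Matrix.smul_apply,
        Matrix.one_apply_ne h, Matrix.map_apply, AlgHom.toRingHom_eq_coe, RingHom.coe_coe,
        map_neg, aeval_C, smul_eq_mul, mul_zero, sub_zero, Polynomial.algebraMap_eq]
  rw [Matrix.charpoly, Matrix.charpoly, hmat, ← RingHom.mapMatrix_apply, ← RingHom.map_det,
    comp_eq_aeval]
  rfl

open Polynomial in
/-- If the Lie algebra of an `n`-dimensional transposed Poisson algebra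
over an algebraically closed field of characteristic `≠ 2` is directly indecomposable,
then for every `x` the characteristic polynomial of `P_x = mul x` is `(t - λ_x)^n`. -/
theorem tpa_indecomposable_charpoly {F P : Type*} [Field F] [IsAlgClosed F]
    (hchar : (2 : F) ≠ 0)
    [AddCommGroup P] [Module F P] [FiniteDimensional F P]
    (mul bra : P →ₗ[F] P →ₗ[F] P)
    (hcomm : ∀ x y : P, mul x y = mul y x)
    (hassoc : ∀ x y z : P, mul (mul x y) z = mul x (mul y z))
    (halt : ∀ x : P, bra x x = 0)
    (hjac : ∀ x y z : P, bra x (bra y z) + bra y (bra z x) + bra z (bra x y) = 0)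
    (hleib : ∀ x y z : P, (2 : F) • mul x (bra y z) = bra (mul x y) z + bra y (mul x z))
    -- `(P, [·,·])` is directly indecomposable: for Lie ideals `I, J` with `P = I ⊕ J`,
    -- one has `I = 0` or `J = 0`.
    (hind : ∀ I J : Submodule F P,
      (∀ y : P, ∀ x ∈ I, bra y x ∈ I) → (∀ y : P, ∀ x ∈ J, bra y x ∈ J) →
      I ⊓ J = ⊥ → I ⊔ J = ⊤ → I = ⊥ ∨ J = ⊥) :
    ∀ x : P, ∃ lam : F,
      LinearMap.charpoly (mul x) = (X - C lam) ^ (Module.finrank F P) := by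
  intro x
  rcases subsingleton_or_nontrivial P with hP | hP
  · refine ⟨0, ?_⟩
    have h0 : Module.finrank F P = 0 := Module.finrank_zero_of_subsingleton
    rw [h0, pow_zero]
    refine (Polynomial.Monic.natDegree_eq_zero (LinearMap.charpoly_monic (mul x))).mp ?_
    rw [LinearMap.charpoly_natDegree, h0]
  · obtain ⟨lam, hlam⟩ := Module.End.exists_eigenvalue (K := F) (V := P) (mul x)
    have huniq : ∀ μ : F, Module.End.HasEigenvalue (mul x) μ → μ = lam := by
      intro μ hmu
      by_contra hne
      set G : F → Submodule F P := fun κ => Module.End.maxGenEigenspace (mul x) κ with hGdef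
      set I : Submodule F P := G lam with hI
      set J : Submodule F P := ⨆ κ, ⨆ _ : κ ≠ lam, G κ with hJ
      have hGtop : (⨆ κ, G κ) = ⊤ := Module.End.iSup_maxGenEigenspace_eq_top (mul x)
      have hJle : ∀ κ : F, κ ≠ lam → G κ ≤ J := fun κ hκ =>
        le_iSup₂ (f := fun κ (_ : κ ≠ lam) => G κ) κ hκ
      have hIdeal : ∀ y : P, ∀ v ∈ I, bra y v ∈ I := by
        intro y v hv
        have hy : y ∈ ⨆ κ, G κ := by rw [hGtop]; trivial
        refine Submodule.iSup_induction (motive := fun u => bra u v ∈ I) G hy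
          (fun κ u hu => ?_) ?_ ?_
        · rcases eq_or_ne κ lam with rfl | hκ
          · exact tpa_closed hchar mul bra hleib x hu hv
          · rw [tpa_vanish mul bra hassoc hleib x hκ hu hv]
            exact zero_mem I
        · simp only [map_zero, LinearMap.zero_apply]
          exact zero_mem I
        · intro a c ha hc
          simp only [map_add, LinearMap.add_apply]
          exact add_mem ha hc
      have hJdeal : ∀ y : P, ∀ v ∈ J, bra y v ∈ J := by
        intro y v hv
        refine Submodule.iSup_induction (motive := fun u => bra y u ∈ J)
          (fun κ => ⨆ _ : κ ≠ lam, G κ) hv (fun κ u hu => ?_) ?_ ?_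
        · rcases eq_or_ne κ lam with rfl | hκ
          · have hu0 : u = 0 := by simpa using hu
            rw [hu0, map_zero]
            exact zero_mem J
          · simp only [iSup_pos hκ] at hu
            have hy : y ∈ ⨆ σ, G σ := by rw [hGtop]; trivial
            refine Submodule.iSup_induction (motive := fun t => bra t u ∈ J) G hy
              (fun σ t ht => ?_) ?_ ?_
            · rcases eq_or_ne σ κ with rfl | hσ
              · exact hJle σ hκ (tpa_closed hchar mul bra hleib x ht hu)
              · rw [tpa_vanish mul bra hassoc hleib x hσ ht hu]
                exact zero_mem J
            · simp only [map_zero, LinearMap.zero_apply]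
              exact zero_mem J
            · intro a c ha hc
              simp only [map_add, LinearMap.add_apply]
              exact add_mem ha hc
        · show bra y (0:P) ∈ J
          rw [map_zero]
          exact zero_mem J
        · intro a c ha hc
          show bra y (a + c) ∈ J
          rw [map_add]
          exact add_mem ha hc
      have hdisj : I ⊓ J = ⊥ :=
        disjoint_iff.mp (Module.End.independent_maxGenEigenspace (mul x) lam)
      have hsup : I ⊔ J = ⊤ := by
        refine le_antisymm le_top ?_
        rw [← hGtop]
        refine iSup_le fun κ => ?_
        rcases eq_or_ne κ lam with rfl | hκ
        · exact le_sup_left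
        · exact le_trans (hJle κ hκ) le_sup_right
      rcases hind I J hIdeal hJdeal hdisj hsup with hbot | hbot
      · have h1 : Module.End.eigenspace (mul x) lam ≤ I :=
          (Module.End.genEigenspace (mul x) lam).monotone le_top
        rw [hbot] at h1
        exact hlam (le_bot_iff.mp h1)
      · have h1 : Module.End.eigenspace (mul x) μ ≤ J :=
          le_trans ((Module.End.genEigenspace (mul x) μ).monotone le_top) (hJle μ hne)
        rw [hbot] at h1
        exact hmu (le_bot_iff.mp h1)
    refine ⟨lam, ?_⟩
    have htop : Module.End.maxGenEigenspace (mul x) lam = ⊤ := by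
      rw [← Module.End.iSup_maxGenEigenspace_eq_top (mul x)]
      refine le_antisymm (le_iSup _ lam) (iSup_le fun κ => ?_)
      rcases eq_or_ne κ lam with rfl | hκ
      · exact le_rfl
      · suffices h : Module.End.maxGenEigenspace (mul x) κ = ⊥ by
          rw [h]; exact bot_le
        by_contra hne
        obtain ⟨v, hv, hv0⟩ := Submodule.exists_mem_ne_zero_of_ne_bot hne
        rw [Module.End.mem_maxGenEigenspace] at hv
        obtain ⟨k, hk⟩ := hv
        have hgen : Module.End.HasGenEigenvalue (mul x) κ k := by
          rw [Module.End.hasGenEigenvalue_iff]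
          exact Submodule.ne_bot_iff _ |>.mpr
            ⟨v, Module.End.mem_genEigenspace_nat.mpr hk, hv0⟩
        exact hκ (huniq κ (Module.End.hasEigenvalue_of_hasGenEigenvalue hgen))
    have hN : ∀ m : P, ∃ k : ℕ, (((mul x - lam • 1 : Module.End F P))^k) m = 0 := by
      intro m
      have hm : m ∈ Module.End.maxGenEigenspace (mul x) lam := by rw [htop]; trivial
      exact (Module.End.mem_maxGenEigenspace _ _ _).mp hm
    have hch : (mul x - lam • 1 : Module.End F P).charpoly = X ^ (Module.finrank F P) :=
      (LinearMap.charpoly_eq_X_pow_iff _).mpr hN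
    set b := Module.finBasis F P with hb
    have hmx : (mul x - lam • 1 : Module.End F P).charpoly
        = (LinearMap.charpoly (mul x)).comp (X + C lam) := by
      have h1 := LinearMap.charpoly_toMatrix (mul x) b
      have h2 := LinearMap.charpoly_toMatrix (mul x - lam • 1 : Module.End F P) b
      have h3 : LinearMap.toMatrix b b (mul x - lam • 1 : Module.End F P)
          = LinearMap.toMatrix b b (mul x) - lam • 1 := by
        rw [map_sub, map_smul, LinearMap.toMatrix_one]
      rw [← h2, h3, charpoly_sub_smul_one, h1]
    have hcomp : (LinearMap.charpoly (mul x)).comp (X + C lam) = X ^ (Module.finrank F P) := by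
      rw [← hmx, hch]
    have hXX : ((X + C lam).comp (X - C lam) : F[X]) = X := by
      rw [add_comp, X_comp, C_comp]
      ring
    calc LinearMap.charpoly (mul x)
        = ((LinearMap.charpoly (mul x)).comp (X + C lam)).comp (X - C lam) := by
          rw [comp_assoc, hXX, comp_X]
      _ = (X ^ (Module.finrank F P)).comp (X - C lam) := by rw [hcomp]
      _ = (X - C lam) ^ (Module.finrank F P) := by rw [pow_comp, X_comp]
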